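/- Let P > 0. Suppose (x_1^{SB},…,x_{N_s}^{SB}, t*) is an optimal solution of the block-level SB slot-variant problem (maximize t subject to CI_i(x_i, t) for all i and ∑_{i=1}^{N_s} ‖x_i‖² ≤ P) and t* > 0. Then ∑_{i=1}^{N_s} ‖x_i^{SB}‖² = P, and the tuple (x_1^{SB}/t*, …, x_{N_s}^{SB}/t*) is an optimal solution of the block-level PM slot-variant problem (minimize ∑_i ‖x_i‖² subject to CI_i(x_i, 1) for all i), with optimal value ∑_i ‖x_i^{SB}/t*‖² = P/(t*)². -/
import Mathlib


open scoped BigOperators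

/-- The constructive-interference (CI) constraint in a given symbol slot:
`CI Nt Nr M h s γ σ x t` holds iff for every user `k`,
`Re((h_kᵀ x)/s_k) − |Im((h_kᵀ x)/s_k)| / tan(π/M) ≥ t·√(γ_k)·σ`. -/
noncomputable def CI (Nt Nr M : ℕ) (h : Fin Nr → Fin Nt → ℂ)
    (s : Fin Nr → ℂ) (γ : Fin Nr → ℝ) (σ : ℝ)
    (x : Fin Nt → ℂ) (t : ℝ) : Prop :=
  ∀ k : Fin Nr,
    ((∑ j, h k j * x j) / s k).re -
        |((∑ j, h k j * x j) / s k).im| / Real.tan (Real.pi / M) ≥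
      t * Real.sqrt (γ k) * σ

lemma CI_smul {Nt Nr M : ℕ} {h : Fin Nr → Fin Nt → ℂ} {s : Fin Nr → ℂ}
    {γ : Fin Nr → ℝ} {σ : ℝ} {x : Fin Nt → ℂ} {t : ℝ} {c : ℝ} (hc : 0 < c)
    (H : CI Nt Nr M h s γ σ x t) : CI Nt Nr M h s γ σ (c • x) (c * t) := by
  intro k
  have hk := H k
  have hsum : (∑ j, h k j * (c • x) j) = (c : ℂ) * ∑ j, h k j * x j := by
    rw [Finset.mul_sum]
    refine Finset.sum_congr rfl fun j _ => ?_
    simp [Complex.real_smul]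
    ring
  rw [hsum, mul_div_assoc]
  set z := (∑ j, h k j * x j) / s k with hz
  have hre : ((c:ℂ) * z).re = c * z.re := by simp [Complex.mul_re]
  have him : ((c:ℂ) * z).im = c * z.im := by simp [Complex.mul_im]
  rw [hre, him, abs_mul, abs_of_pos hc]
  have : c * (t * Real.sqrt (γ k) * σ) ≤ c * (z.re - |z.im| / Real.tan (Real.pi / M)) :=
    mul_le_mul_of_nonneg_left hk hc.le
  calc c * t * Real.sqrt (γ k) * σ = c * (t * Real.sqrt (γ k) * σ) := by ring
    _ ≤ c * (z.re - |z.im| / Real.tan (Real.pi / M)) := this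
    _ = c * z.re - c * |z.im| / Real.tan (Real.pi / M) := by ring

lemma sum_norm_smul_sq {Nt Ns : ℕ} (c : ℝ) (hc : 0 ≤ c) (y : Fin Ns → Fin Nt → ℂ) :
    ∑ i, ∑ j, ‖(c • y i) j‖ ^ 2 = c ^ 2 * ∑ i, ∑ j, ‖y i j‖ ^ 2 := by
  rw [Finset.mul_sum]
  refine Finset.sum_congr rfl fun i _ => ?_
  rw [Finset.mul_sum]
  refine Finset.sum_congr rfl fun j _ => ?_
  simp [norm_smul, Real.norm_eq_abs, abs_of_nonneg hc, mul_pow]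

/-- A block-level SB slot-variant optimum `(x^{SB}, t*)` with `t* > 0` has active
power constraint, and `x^{SB}/t*` is a block-level PM slot-variant optimum with
value `P/(t*)²`. -/
theorem stmt6 (Nt Nr Ns M : ℕ) (hNt : 0 < Nt) (hNr : 0 < Nr) (hNs : 0 < Ns)
    (hM : 3 ≤ M)
    (h : Fin Nr → Fin Nt → ℂ)
    (s : Fin Nr → Fin Ns → ℂ) (hs : ∀ k i, s k i ≠ 0)
    (γ : Fin Nr → Fin Ns → ℝ) (hγ : ∀ k i, 0 ≤ γ k i)
    (σ : ℝ) (hσ : 0 < σ)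
    (P : ℝ) (hP : 0 < P)
    (xSB : Fin Ns → Fin Nt → ℂ) (tstar : ℝ) (htstar : 0 < tstar)
    (hfeas : ∀ i, CI Nt Nr M h (fun k => s k i) (fun k => γ k i) σ (xSB i) tstar)
    (hpow : ∑ i, ∑ j, ‖xSB i j‖ ^ 2 ≤ P)
    (hopt : ∀ (x : Fin Ns → Fin Nt → ℂ) (t : ℝ),
      (∀ i, CI Nt Nr M h (fun k => s k i) (fun k => γ k i) σ (x i) t) →
      (∑ i, ∑ j, ‖x i j‖ ^ 2 ≤ P) → t ≤ tstar) :
    (∑ i, ∑ j, ‖xSB i j‖ ^ 2 = P) ∧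
    (∀ i, CI Nt Nr M h (fun k => s k i) (fun k => γ k i) σ
        ((1 / tstar) • xSB i) 1) ∧
    (∀ y : Fin Ns → Fin Nt → ℂ,
      (∀ i, CI Nt Nr M h (fun k => s k i) (fun k => γ k i) σ (y i) 1) →
      ∑ i, ∑ j, ‖((1 / tstar) • xSB i) j‖ ^ 2 ≤ ∑ i, ∑ j, ‖y i j‖ ^ 2) ∧
    (∑ i, ∑ j, ‖((1 / tstar) • xSB i) j‖ ^ 2 = P / tstar ^ 2) := by
  have htinv : 0 < 1 / tstar := by positivity
  -- Part 1 : power constraint active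
  have hSnonneg : (0:ℝ) ≤ ∑ i, ∑ j, ‖xSB i j‖ ^ 2 := by positivity
  have hPart1 : ∑ i, ∑ j, ‖xSB i j‖ ^ 2 = P := by
    by_contra hne
    have hlt : ∑ i, ∑ j, ‖xSB i j‖ ^ 2 < P := lt_of_le_of_ne hpow hne
    set S := ∑ i, ∑ j, ‖xSB i j‖ ^ 2 with hS
    rcases eq_or_lt_of_le hSnonneg with hzero | hpos
    · -- S = 0 : scale t by 2
      have hfeas2 : ∀ i, CI Nt Nr M h (fun k => s k i) (fun k => γ k i) σ
          ((2:ℝ) • xSB i) (2 * tstar) := fun i => CI_smul two_pos (hfeas i)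
      have hpow2 : ∑ i, ∑ j, ‖((2:ℝ) • xSB i) j‖ ^ 2 ≤ P := by
        rw [sum_norm_smul_sq 2 (by norm_num)]
        rw [← hS, ← hzero]; linarith
      have := hopt (fun i => (2:ℝ) • xSB i) (2 * tstar) hfeas2 hpow2
      linarith
    · -- 0 < S < P : scale by sqrt (P/S)
      set c := Real.sqrt (P / S) with hc
      have hcpos : 0 < c := Real.sqrt_pos.mpr (div_pos hP hpos)
      have hc1 : 1 < c := by
        rw [hc]
        have : 1 < P / S := (one_lt_div hpos).mpr hlt
        calc (1:ℝ) = Real.sqrt 1 := by simp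
          _ < Real.sqrt (P / S) := Real.sqrt_lt_sqrt (by norm_num) this
      have hcsq : c ^ 2 = P / S := Real.sq_sqrt (div_pos hP hpos).le
      have hfeas2 : ∀ i, CI Nt Nr M h (fun k => s k i) (fun k => γ k i) σ
          (c • xSB i) (c * tstar) := fun i => CI_smul hcpos (hfeas i)
      have hpow2 : ∑ i, ∑ j, ‖(c • xSB i) j‖ ^ 2 ≤ P := by
        rw [sum_norm_smul_sq c hcpos.le, ← hS, hcsq, div_mul_cancel₀ _ (ne_of_gt hpos)]
      have := hopt (fun i => c • xSB i) (c * tstar) hfeas2 hpow2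
      nlinarith
  refine ⟨hPart1, ?_, ?_, ?_⟩
  · intro i
    have := CI_smul htinv (hfeas i)
    rwa [one_div_mul_cancel (ne_of_gt htstar)] at this
  · intro y hy
    have hval : ∑ i, ∑ j, ‖((1 / tstar) • xSB i) j‖ ^ 2 = P / tstar ^ 2 := by
      rw [sum_norm_smul_sq _ htinv.le, hPart1]
      field_simp
    rw [hval]
    by_contra hlt
    push_neg at hlt
    set Sy := ∑ i, ∑ j, ‖y i j‖ ^ 2 with hSy
    have hSynn : (0:ℝ) ≤ Sy := by positivity
    rcases eq_or_lt_of_le hSynn with hzero | hpos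
    · -- Sy = 0 : scale y by 2*tstar, feasible for t = 2*tstar
      have hfeas2 : ∀ i, CI Nt Nr M h (fun k => s k i) (fun k => γ k i) σ
          ((2 * tstar) • y i) (2 * tstar) := by
        intro i
        have := CI_smul (by positivity : (0:ℝ) < 2 * tstar) (hy i)
        rwa [mul_one] at this
      have hpow2 : ∑ i, ∑ j, ‖((2 * tstar) • y i) j‖ ^ 2 ≤ P := by
        rw [sum_norm_smul_sq _ (by positivity), ← hSy, ← hzero]
        linarith
      have := hopt (fun i => (2 * tstar) • y i) (2 * tstar) hfeas2 hpow2
      linarith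
    · -- Sy > 0
      set c := Real.sqrt (P / Sy) with hc
      have hdiv : 0 < P / Sy := div_pos hP hpos
      have hcpos : 0 < c := Real.sqrt_pos.mpr hdiv
      have hcsq : c ^ 2 = P / Sy := Real.sq_sqrt hdiv.le
      have hct : tstar < c := by
        have h1 : tstar ^ 2 < P / Sy := by
          rw [lt_div_iff₀ hpos]
          calc tstar ^ 2 * Sy < tstar ^ 2 * (P / tstar ^ 2) := by
                apply mul_lt_mul_of_pos_left hlt (by positivity)
            _ = P := by field_simp
        exact (Real.lt_sqrt htstar.le).mpr h1
      have hfeas2 : ∀ i, CI Nt Nr M h (fun k => s k i) (fun k => γ k i) σ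
          (c • y i) c := by
        intro i
        have := CI_smul hcpos (hy i)
        rwa [mul_one] at this
      have hpow2 : ∑ i, ∑ j, ‖(c • y i) j‖ ^ 2 ≤ P := by
        rw [sum_norm_smul_sq _ hcpos.le, ← hSy, hcsq, div_mul_cancel₀ _ (ne_of_gt hpos)]
      have := hopt (fun i => c • y i) c hfeas2 hpow2
      linarith
  · rw [sum_norm_smul_sq _ htinv.le, hPart1]
    field_simp
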